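/- Let Σ be a symmetric positive semidefinite n×n matrix satisfying Σ = W + M Σ Mᵀ with W symmetric positive definite and ρ(M) < 1. Then tr(Σ) ≥ σ_min(W) / (2(1 - ρ(M))), where σ_min(W) denotes the smallest eigenvalue of W. -/

import Mathlib

open Matrix

namespace Stmt4Aux

variable {n : ℕ}

noncomputable abbrev f : ℝ →+* ℂ := algebraMap ℝ ℂ

lemma star_dot_self (u : Fin n → ℂ) :
    star u ⬝ᵥ u = ((∑ i, Complex.normSq (u i) : ℝ) : ℂ) := by
  simp only [dotProduct, Pi.star_apply, Complex.ofReal_sum]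
  refine Finset.sum_congr rfl fun i _ => ?_
  rw [Complex.normSq_eq_conj_mul_self]
  rfl

lemma map_conjTranspose (B : Matrix (Fin n) (Fin n) ℝ) :
    (Bᴴ).map f = (B.map f)ᴴ := by
  ext i j
  simp [conjTranspose_apply, Complex.conj_ofReal]

lemma quad (B : Matrix (Fin n) (Fin n) ℝ) (v : Fin n → ℂ) :
    star v ⬝ᵥ (((Bᴴ * B).map f) *ᵥ v)
      = ((∑ i, Complex.normSq (((B.map f) *ᵥ v) i) : ℝ) : ℂ) := by
  rw [Matrix.map_mul, map_conjTranspose, ← mulVec_mulVec, dotProduct_mulVec,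
    ← star_mulVec, star_dot_self]

end Stmt4Aux

open Stmt4Aux in
/-- If a PSD matrix `Σ` solves the Lyapunov equation `Σ = W + M Σ Mᵀ` with `W` positive
definite and spectral radius `ρ(M) < 1`, then `tr(Σ) ≥ σ_min(W) / (2(1 - ρ(M)))`. -/
theorem stmt_4 {n : ℕ} (hn : 0 < n) (M W Sig : Matrix (Fin n) (Fin n) ℝ)
    (hW : W.PosDef) (hSig : Sig.PosSemidef)
    (hsol : Sig = W + M * Sig * Mᵀ)
    (ρ : ℝ)
    (hρ : IsGreatest {r : ℝ | ∃ z : ℂ, (M.map (algebraMap ℝ ℂ)).charpoly.IsRoot z ∧ ‖z‖ = r} ρ)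
    (hρ1 : ρ < 1) :
    (⨅ i, hW.1.eigenvalues i) / (2 * (1 - ρ)) ≤ Sig.trace := by
  have : Nonempty (Fin n) := ⟨⟨0, hn⟩⟩
  classical
  obtain ⟨z, hz, hznorm⟩ := hρ.1
  have hρ0 : 0 ≤ ρ := hznorm ▸ norm_nonneg z
  set σ : ℝ := ⨅ i, hW.1.eigenvalues i with hσ
  -- eigenvector of the transpose
  have hdet : ((z • (1 : Matrix (Fin n) (Fin n) ℂ) - (M.map f)ᵀ)).det = 0 := by
    have h1 : ((charmatrix (M.map f)).map (Polynomial.evalRingHom z))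
        = z • (1 : Matrix (Fin n) (Fin n) ℂ) - (M.map f) := by
      ext i j
      by_cases h : i = j <;>
        simp [charmatrix_apply, h, Matrix.one_apply, diagonal_apply, Matrix.smul_apply]
    have h2 : ((charmatrix (M.map f)).map (Polynomial.evalRingHom z)).det = 0 := by
      rw [← RingHom.mapMatrix_apply, ← RingHom.map_det]
      simpa [Matrix.charpoly] using hz
    have h3 : (z • (1 : Matrix (Fin n) (Fin n) ℂ) - (M.map f)).det = 0 := by rw [← h1]; exact h2
    calc ((z • (1 : Matrix (Fin n) (Fin n) ℂ) - (M.map f)ᵀ)).det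
        = ((z • (1 : Matrix (Fin n) (Fin n) ℂ) - (M.map f))ᵀ).det := by
          congr 1
          rw [transpose_sub, transpose_smul, transpose_one]
      _ = 0 := by rw [Matrix.det_transpose]; exact h3
  obtain ⟨v, hv0, hveq⟩ := (Matrix.exists_mulVec_eq_zero_iff).mpr hdet
  have hvz : (M.map f)ᵀ *ᵥ v = z • v := by
    have := hveq
    rw [sub_mulVec, sub_eq_zero] at this
    rw [← this, smul_mulVec, one_mulVec]
  -- decompositions
  obtain ⟨B, hB⟩ : ∃ B : Matrix (Fin n) (Fin n) ℝ, Sig = Bᴴ * B := by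
    open scoped MatrixOrder in
    obtain ⟨B, hB⟩ := CStarAlgebra.nonneg_iff_eq_star_mul_self.mp hSig.nonneg
    exact ⟨B, hB⟩
  -- W - σ • 1 is PSD
  have hWσ : (W - σ • 1).PosSemidef := by
    have hH := hW.1
    have hU : (hH.eigenvectorUnitary : Matrix (Fin n) (Fin n) ℝ)
        * (star (hH.eigenvectorUnitary : Matrix (Fin n) (Fin n) ℝ)) = 1 :=
      Matrix.mem_unitaryGroup_iff.mp hH.eigenvectorUnitary.2
    have hkey : W - σ • 1
        = (hH.eigenvectorUnitary : Matrix (Fin n) (Fin n) ℝ)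
          * diagonal (fun i => hH.eigenvalues i - σ)
          * (star (hH.eigenvectorUnitary : Matrix (Fin n) (Fin n) ℝ)) := by
      have hst := hH.spectral_theorem
      rw [Unitary.conjStarAlgAut_apply] at hst
      have hdd : diagonal (fun i => hH.eigenvalues i - σ)
          = diagonal (RCLike.ofReal ∘ hH.eigenvalues) - σ • 1 := by
        rw [smul_one_eq_diagonal, ← diagonal_sub]
        congr 1
      rw [hdd, mul_sub, sub_mul, ← hst]
      congr 1
      rw [Matrix.mul_smul, Matrix.smul_mul, mul_one, hU]
    have hdiagPSD : (diagonal (fun i => hH.eigenvalues i - σ)).PosSemidef :=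
      Matrix.posSemidef_diagonal_iff.mpr fun i => by
        have : σ ≤ hH.eigenvalues i := ciInf_le (Set.Finite.bddBelow (Set.finite_range _)) i
        linarith
    have h5 := hdiagPSD.mul_mul_conjTranspose_same
      (hH.eigenvectorUnitary : Matrix (Fin n) (Fin n) ℝ)
    rw [hkey, Matrix.star_eq_conjTranspose]
    exact h5
  obtain ⟨D, hD⟩ : ∃ D : Matrix (Fin n) (Fin n) ℝ, W - σ • 1 = Dᴴ * D := by
    open scoped MatrixOrder in
    obtain ⟨D, hD⟩ := CStarAlgebra.nonneg_iff_eq_star_mul_self.mp hWσ.nonneg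
    exact ⟨D, hD⟩
  -- complexified solution equation
  have hsolC : Sig.map f = W.map f + (M.map f) * (Sig.map f) * (M.map f)ᵀ := by
    conv_lhs => rw [hsol]
    rw [Matrix.map_add _ (map_add f), Matrix.map_mul, Matrix.map_mul, Matrix.transpose_map]
  -- quantities
  set Q : ℝ := ∑ i, Complex.normSq (((B.map f) *ᵥ v) i) with hQdef
  set R : ℝ := ∑ i, Complex.normSq (((D.map f) *ᵥ v) i) with hRdef
  set N : ℝ := ∑ i, Complex.normSq (v i) with hNdef
  have hq : star v ⬝ᵥ ((Sig.map f) *ᵥ v) = (Q : ℂ) := by rw [hB]; exact quad B v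
  -- W term
  have hw : star v ⬝ᵥ ((W.map f) *ᵥ v) = ((σ * N + R : ℝ) : ℂ) := by
    have hWeq : W = σ • 1 + Dᴴ * D := by rw [← hD]; abel
    rw [hWeq, Matrix.map_add _ (map_add f), add_mulVec, dotProduct_add, quad D v]
    have hmap : (σ • (1 : Matrix (Fin n) (Fin n) ℝ)).map f
        = (σ : ℂ) • (1 : Matrix (Fin n) (Fin n) ℂ) := by
      ext i j
      by_cases h : i = j <;> simp [Matrix.one_apply, h]
    rw [hmap, smul_mulVec, one_mulVec, dotProduct_smul, star_dot_self, hNdef, hRdef]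
    push_cast
    all_goals simp only [smul_eq_mul]
    all_goals ring
  -- M term
  have hMterm : star v ⬝ᵥ (((M.map f) * (Sig.map f) * (M.map f)ᵀ) *ᵥ v)
      = ((ρ ^ 2 : ℝ) : ℂ) * (Q : ℂ) := by
    have hMH : ((M.map f)ᵀ)ᴴ = M.map f := by
      ext i j
      simp [conjTranspose_apply, Matrix.map_apply, Complex.conj_ofReal]
    calc star v ⬝ᵥ (((M.map f) * (Sig.map f) * (M.map f)ᵀ) *ᵥ v)
        = star v ⬝ᵥ ((M.map f) *ᵥ ((Sig.map f) *ᵥ ((M.map f)ᵀ *ᵥ v))) := by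
          rw [mulVec_mulVec, mulVec_mulVec]
      _ = star v ⬝ᵥ ((M.map f) *ᵥ (z • ((Sig.map f) *ᵥ v))) := by rw [hvz, mulVec_smul]
      _ = z * (star v ⬝ᵥ ((M.map f) *ᵥ ((Sig.map f) *ᵥ v))) := by
          rw [mulVec_smul, dotProduct_smul]; rfl
      _ = z * ((star v ᵥ* ((M.map f)ᵀ)ᴴ) ⬝ᵥ ((Sig.map f) *ᵥ v)) := by
          rw [dotProduct_mulVec, hMH]
      _ = z * ((star ((M.map f)ᵀ *ᵥ v)) ⬝ᵥ ((Sig.map f) *ᵥ v)) := by rw [star_mulVec]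
      _ = z * ((starRingEnd ℂ z) * (star v ⬝ᵥ ((Sig.map f) *ᵥ v))) := by
          rw [hvz, star_smul, smul_dotProduct]; rfl
      _ = ((ρ ^ 2 : ℝ) : ℂ) * (Q : ℂ) := by
          rw [hq, ← mul_assoc, Complex.mul_conj, ← hznorm]
          norm_cast
          rw [Complex.sq_norm]
  -- the complex identity, then the real one
  have hQeq : Q = σ * N + R + ρ ^ 2 * Q := by
    have hC := congrArg (fun A : Matrix (Fin n) (Fin n) ℂ => star v ⬝ᵥ (A *ᵥ v)) hsolC
    simp only [add_mulVec, dotProduct_add] at hC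
    rw [hq, hw, hMterm] at hC
    have : (Q : ℂ) = ((σ * N + R + ρ ^ 2 * Q : ℝ) : ℂ) := by rw [hC]; push_cast; ring
    exact_mod_cast this
  -- positivity facts
  have hQ0 : 0 ≤ Q := Finset.sum_nonneg fun i _ => Complex.normSq_nonneg _
  have hR0 : 0 ≤ R := Finset.sum_nonneg fun i _ => Complex.normSq_nonneg _
  have hN0 : 0 < N := by
    obtain ⟨i, hi⟩ := Function.ne_iff.mp hv0
    exact Finset.sum_pos' (fun j _ => Complex.normSq_nonneg _)
      ⟨i, Finset.mem_univ i, Complex.normSq_pos.mpr hi⟩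
  -- trace as sum of squares and Cauchy-Schwarz
  have htr : Sig.trace = ∑ i, ∑ j, (B i j) ^ 2 := by
    rw [hB, Matrix.trace]
    rw [Finset.sum_comm]
    refine Finset.sum_congr rfl fun i _ => ?_
    simp [Matrix.mul_apply, Matrix.diag, conjTranspose_apply, sq]
  have hCS : Q ≤ Sig.trace * N := by
    rw [htr, Finset.sum_mul, hQdef]
    refine Finset.sum_le_sum fun i _ => ?_
    have hrepr : ((B.map f) *ᵥ v) i = ∑ j, ((B i j : ℝ) : ℂ) * v j := by
      simp [Matrix.mulVec, dotProduct, Matrix.map_apply]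
    have h2 : ‖((B.map f) *ᵥ v) i‖ ≤ ∑ j, |B i j| * ‖v j‖ := by
      rw [hrepr]
      refine (norm_sum_le _ _).trans (le_of_eq (Finset.sum_congr rfl fun j _ => ?_))
      rw [norm_mul, Complex.norm_real, Real.norm_eq_abs]
    have h3 : (∑ j, |B i j| * ‖v j‖) ^ 2 ≤ (∑ j, |B i j| ^ 2) * ∑ j, ‖v j‖ ^ 2 :=
      Finset.sum_mul_sq_le_sq_mul_sq _ _ _
    calc Complex.normSq (((B.map f) *ᵥ v) i)
        = ‖((B.map f) *ᵥ v) i‖ ^ 2 := by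
          rw [Complex.normSq_eq_norm_sq]
      _ ≤ (∑ j, |B i j| * ‖v j‖) ^ 2 := pow_le_pow_left₀ (norm_nonneg _) h2 2
      _ ≤ (∑ j, |B i j| ^ 2) * ∑ j, ‖v j‖ ^ 2 := h3
      _ = (∑ j, B i j ^ 2) * N := by
          rw [hNdef]
          congr 1
          · exact Finset.sum_congr rfl fun j _ => sq_abs _
          · exact Finset.sum_congr rfl fun j _ => by
              rw [Complex.sq_norm]
  have hS0 : 0 ≤ Sig.trace := by
    rw [htr]
    exact Finset.sum_nonneg fun i _ => Finset.sum_nonneg fun j _ => sq_nonneg _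
  -- final arithmetic
  rw [div_le_iff₀ (by nlinarith : (0:ℝ) < 2 * (1 - ρ))]
  have h1ρ : (0:ℝ) ≤ 1 - ρ ^ 2 := by nlinarith
  have h6 : σ * N ≤ (1 - ρ ^ 2) * (Sig.trace * N) := by
    have := mul_le_mul_of_nonneg_left hCS h1ρ
    nlinarith [hR0]
  have h7 : (1 - ρ ^ 2) * (Sig.trace * N) ≤ (Sig.trace * (2 * (1 - ρ))) * N := by
    nlinarith [mul_nonneg (sq_nonneg (1 - ρ)) (mul_nonneg hS0 hN0.le)]
  exact le_of_mul_le_mul_right (le_trans h6 h7) hN0
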